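/- Let g be a restricted Lie algebra over a field k of characteristic p > 0, and let b be a Lie subalgebra of g that is maximal among solvable Lie subalgebras of g. Then b is a restricted (p-closed) subalgebra of g, i.e. b is closed under the p-operation of g. -/

import Mathlib

attribute [local instance 100] LieRing.ofAssociativeRing

/-- in a restricted Lie algebra `(g, [p])` over a field of
characteristic `p > 0`, every maximal solvable Lie subalgebra is restricted,
i.e. closed under the `p`-operation.  The restricted structure is encoded via
Jacobson's characterization: the `p`-operation `pOp` is realized as the
associative `p`-th power under a faithful embedding `ι` of `g` into an
associative algebra. -/
theorem maximal_solvable_subalgebra_is_restricted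
    {p : ℕ} [Fact p.Prime] {k : Type*} [Field k] [CharP k p]
    {L : Type*} [LieRing L] [LieAlgebra k L]
    (pOp : L → L)
    (A : Type*) [Ring A] [Algebra k A]
    (ι : L →ₗ⁅k⁆ A) (hι : Function.Injective ι)
    (hp : ∀ x : L, ι (pOp x) = ι x ^ p)
    (b : LieSubalgebra k L) (hb : LieAlgebra.IsSolvable b)
    (hmax : ∀ c : LieSubalgebra k L, LieAlgebra.IsSolvable c → b ≤ c → c = b) :
    ∀ x ∈ b, pOp x ∈ b := by
  intro x hx
  rcases subsingleton_or_nontrivial A with hA | hA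
  · have : pOp x = x := hι (Subsingleton.elim _ _)
    rwa [this]
  haveI : CharP (Module.End k A) p :=
    charP_of_injective_algebraMap (algebraMap k (Module.End k A)).injective p
  set z := pOp x with hz
  -- key: iterated adjoint identity
  have had : ∀ (n : ℕ) (y : L),
      ((LieAlgebra.ad k A (ι x)) ^ n) (ι y) = ι (((LieAlgebra.ad k L x) ^ n) y) := by
    intro n
    induction n with
    | zero => intro y; simp
    | succ n ih =>
      intro y
      rw [pow_succ', pow_succ']
      simp only [Module.End.mul_apply, LieAlgebra.ad_apply]
      rw [ih, ← ι.map_lie]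
  have hadp : ∀ y : L, ⁅z, y⁆ = ((LieAlgebra.ad k L x) ^ p) y := by
    intro y
    apply hι
    rw [ι.map_lie, hp x]
    have h1 : ⁅(ι x) ^ p, ι y⁆ = (LieAlgebra.ad k A ((ι x) ^ p)) (ι y) := rfl
    have h2 : LieAlgebra.ad k A ((ι x) ^ p) = (LieAlgebra.ad k A (ι x)) ^ p := by
      rw [LieAlgebra.ad_eq_lmul_left_sub_lmul_right]
      simp only [Pi.sub_apply]
      rw [← LinearMap.pow_mulLeft, ← LinearMap.pow_mulRight,
        ← sub_pow_char_of_commute p (LinearMap.commute_mulLeft_right (ι x) (ι x))]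
    rw [h1, h2, had]
  -- closure of b under iterated ad x
  have hadb : ∀ (n : ℕ) (y : L), y ∈ b → ((LieAlgebra.ad k L x) ^ n) y ∈ b := by
    intro n
    induction n with
    | zero => intro y hy; simpa using hy
    | succ n ih =>
      intro y hy
      rw [pow_succ']
      simp only [Module.End.mul_apply, LieAlgebra.ad_apply]
      exact b.lie_mem hx (ih y hy)
  have hzb : ∀ y ∈ b, ⁅z, y⁆ ∈ b := fun y hy => (hadp y) ▸ hadb p y hy
  -- the enlarged subalgebra
  have hmem : ∀ w ∈ b.toSubmodule ⊔ (k ∙ z), ∃ u ∈ b, ∃ t : k, w = u + t • z := by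
    intro w hw
    rcases Submodule.mem_sup.mp hw with ⟨u, hu, v, hv, rfl⟩
    rcases Submodule.mem_span_singleton.mp hv with ⟨t, rfl⟩
    exact ⟨u, hu, t, rfl⟩
  have hkey : ∀ (u₁ u₂ : L) (t₁ t₂ : k), u₁ ∈ b → u₂ ∈ b →
      ⁅u₁ + t₁ • z, u₂ + t₂ • z⁆ ∈ b := by
    intro u₁ u₂ t₁ t₂ hu₁ hu₂
    have heq : ⁅u₁ + t₁ • z, u₂ + t₂ • z⁆ = ⁅u₁, u₂⁆ + t₂ • ⁅u₁, z⁆ + t₁ • ⁅z, u₂⁆ := by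
      simp only [lie_add, add_lie, smul_lie, lie_smul, lie_self, smul_zero, add_zero]
      abel
    rw [heq]
    refine b.add_mem (b.add_mem (b.lie_mem hu₁ hu₂) (b.smul_mem t₂ ?_)) (b.smul_mem t₁ (hzb _ hu₂))
    rw [← lie_skew]
    exact b.neg_mem (hzb _ hu₁)
  let c : LieSubalgebra k L :=
  { toSubmodule := b.toSubmodule ⊔ (k ∙ z)
    lie_mem' := by
      intro w₁ w₂ h₁ h₂
      obtain ⟨u₁, hu₁, t₁, rfl⟩ := hmem _ h₁
      obtain ⟨u₂, hu₂, t₂, rfl⟩ := hmem _ h₂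
      exact Submodule.mem_sup_left (hkey u₁ u₂ t₁ t₂ hu₁ hu₂) }
  have hbc : b ≤ c := fun y hy => Submodule.mem_sup_left hy
  have hzc : z ∈ c := Submodule.mem_sup_right (Submodule.mem_span_singleton_self z)
  have hcb : ∀ w₁ w₂ : L, w₁ ∈ c → w₂ ∈ c → ⁅w₁, w₂⁆ ∈ b := by
    intro w₁ w₂ h₁ h₂
    obtain ⟨u₁, hu₁, t₁, rfl⟩ := hmem _ h₁
    obtain ⟨u₂, hu₂, t₂, rfl⟩ := hmem _ h₂
    exact hkey u₁ u₂ t₁ t₂ hu₁ hu₂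
  -- the ideal of c corresponding to b
  let I : LieIdeal k ↥c :=
  { carrier := {y : c | (y : L) ∈ b}
    add_mem' := fun {y₁ y₂} h₁ h₂ => b.add_mem h₁ h₂
    zero_mem' := b.zero_mem
    smul_mem' := fun t y h => b.smul_mem t h
    lie_mem := by
      intro y m hm
      exact hcb _ _ y.2 (hbc hm) }
  haveI hIsolv : LieAlgebra.IsSolvable ↥I := by
    let f : ↥I →ₗ⁅k⁆ ↥b :=
    { toFun := fun y => ⟨((y : c) : L), y.2⟩
      map_add' := fun y₁ y₂ => rfl
      map_smul' := fun t y => rfl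
      map_lie' := fun {y₁ y₂} => rfl }
    have hf : Function.Injective f := by
      intro y₁ y₂ h
      have h2 : ((y₁ : c) : L) = ((y₂ : c) : L) := congrArg (fun w : ↥b => (w : L)) h
      exact Subtype.ext (Subtype.ext h2)
    exact hf.lieAlgebra_isSolvable
  haveI hcsolv : LieAlgebra.IsSolvable ↥c := by
    obtain ⟨n, hn⟩ := (LieAlgebra.isSolvable_iff k ↥I).mp hIsolv
    refine (LieAlgebra.isSolvable_iff k ↥c).mpr ⟨n + 1, ?_⟩
    have h1 : LieAlgebra.derivedSeries k ↥c 1 ≤ I := by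
      rw [LieAlgebra.derivedSeries_def, LieAlgebra.derivedSeriesOfIdeal_succ,
        LieAlgebra.derivedSeriesOfIdeal_zero]
      rw [LieSubmodule.lie_le_iff]
      intro y _ m _
      exact hcb _ _ y.2 m.2
    have h2 : LieAlgebra.derivedSeries k ↥c (n + 1) ≤
        LieAlgebra.derivedSeriesOfIdeal k ↥c n I := by
      rw [LieAlgebra.derivedSeries_def, show n + 1 = n + 1 from rfl,
        LieAlgebra.derivedSeriesOfIdeal_add]
      exact LieAlgebra.derivedSeriesOfIdeal_mono h1 n
    rw [LieIdeal.derivedSeries_eq_bot_iff] at hn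
    rw [eq_bot_iff]
    exact le_trans h2 (hn ▸ le_refl _)
  have := hmax c hcsolv hbc
  rw [← this]
  exact hzc
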